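/- For n ≥ 3 and any (p,q) ∈ [n]², the sum of F_{n,ℓ}(i,j) over all (i,j) ∈ [n]² with i+j = p+q equals 0, and the sum over all (i,j) with i-j = p-q equals 0; i.e., F_{n,ℓ} sums to zero along every diagonal and anti-diagonal of the board. -/
import Mathlib

open Finset Matrix

/-- The vector `C_{n,ℓ}` (1-based coordinates: the square of `v` is `(v.1+1, v.2+1)`). -/
noncomputable def Cvec (n : ℕ) (l : ℤ) (v : Fin n × Fin n) : ℝ :=
  if (v.2 : ℤ) + 1 = l ∨ (v.2 : ℤ) + 1 = (n : ℤ) + 1 - l then 1 else 0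

/-- The vector `R_{n,ℓ}`. -/
noncomputable def Rvec (n : ℕ) (l : ℤ) (v : Fin n × Fin n) : ℝ :=
  if (v.1 : ℤ) + 1 = l ∨ (v.1 : ℤ) + 1 = (n : ℤ) + 1 - l then -1 else 0

/-- The vector `F_{n,ℓ} = C_{n,ℓ} + R_{n,ℓ}`. -/
noncomputable def Fvec (n : ℕ) (l : ℤ) (v : Fin n × Fin n) : ℝ :=
  Cvec n l v + Rvec n l v

/-- `F_{n,ℓ}` sums to zero along every diagonal and antidiagonal. -/
theorem stmt11 (n : ℕ) (hn : 3 ≤ n) (l : ℤ) (hl1 : 1 ≤ l) (hl2 : l ≤ (n : ℤ))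
    (p q : Fin n) :
    (∑ v ∈ Finset.univ.filter
        (fun v : Fin n × Fin n =>
          ((v.1 : ℤ) + 1) + ((v.2 : ℤ) + 1) = ((p : ℤ) + 1) + ((q : ℤ) + 1)),
        Fvec n l v) = 0 ∧
    (∑ v ∈ Finset.univ.filter
        (fun v : Fin n × Fin n =>
          ((v.1 : ℤ) + 1) - ((v.2 : ℤ) + 1) = ((p : ℤ) + 1) - ((q : ℤ) + 1)),
        Fvec n l v) = 0 := by
  constructor
  · apply Finset.sum_involution (fun v _ => (v.2, v.1))
    · intro v hv
      simp only [Fvec, Cvec, Rvec]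
      by_cases h1 : (v.1 : ℤ) + 1 = l ∨ (v.1 : ℤ) + 1 = (n : ℤ) + 1 - l <;>
        by_cases h2 : (v.2 : ℤ) + 1 = l ∨ (v.2 : ℤ) + 1 = (n : ℤ) + 1 - l <;>
        simp [h1, h2]
    · intro v hv hne
      simp only [Fvec, Cvec, Rvec] at hne ⊢
      intro h
      apply hne
      have : v.1 = v.2 := (Prod.ext_iff.mp h).2
      rw [this]
      by_cases h2 : (v.2 : ℤ) + 1 = l ∨ (v.2 : ℤ) + 1 = (n : ℤ) + 1 - l <;> simp [h2]
    · intro v hv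
      simp only [Finset.mem_filter, Finset.mem_univ, true_and] at hv ⊢
      omega
    · intro v hv
      rfl
  · apply Finset.sum_involution (fun v _ => (v.2.rev, v.1.rev))
    · intro v hv
      have e1 : (v.1.rev : ℤ) = (n : ℤ) - 1 - (v.1 : ℤ) := by
        have := v.1.isLt; simp [Fin.val_rev]; omega
      have e2 : (v.2.rev : ℤ) = (n : ℤ) - 1 - (v.2 : ℤ) := by
        have := v.2.isLt; simp [Fin.val_rev]; omega
      simp only [Fvec, Cvec, Rvec, e1, e2]
      have c1 : ((n : ℤ) - 1 - (v.1 : ℤ) + 1 = l ∨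
          (n : ℤ) - 1 - (v.1 : ℤ) + 1 = (n : ℤ) + 1 - l) ↔
          ((v.1 : ℤ) + 1 = l ∨ (v.1 : ℤ) + 1 = (n : ℤ) + 1 - l) := by omega
      have c2 : ((n : ℤ) - 1 - (v.2 : ℤ) + 1 = l ∨
          (n : ℤ) - 1 - (v.2 : ℤ) + 1 = (n : ℤ) + 1 - l) ↔
          ((v.2 : ℤ) + 1 = l ∨ (v.2 : ℤ) + 1 = (n : ℤ) + 1 - l) := by omega
      rw [if_congr c2 rfl rfl, if_congr c1 rfl rfl]
      by_cases h1 : (v.1 : ℤ) + 1 = l ∨ (v.1 : ℤ) + 1 = (n : ℤ) + 1 - l <;>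
        by_cases h2 : (v.2 : ℤ) + 1 = l ∨ (v.2 : ℤ) + 1 = (n : ℤ) + 1 - l <;>
        simp [h1, h2]
    · intro v hv hne
      simp only [Fvec, Cvec, Rvec] at hne ⊢
      intro h
      apply hne
      have h1 : v.2.rev = v.1 := (Prod.ext_iff.mp h).1
      have e1 : (v.1 : ℤ) = (n : ℤ) - 1 - (v.2 : ℤ) := by
        rw [← h1]; have := v.2.isLt; simp [Fin.val_rev]; omega
      have c1 : ((v.1 : ℤ) + 1 = l ∨ (v.1 : ℤ) + 1 = (n : ℤ) + 1 - l) ↔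
          ((v.2 : ℤ) + 1 = l ∨ (v.2 : ℤ) + 1 = (n : ℤ) + 1 - l) := by omega
      rw [if_congr c1 rfl rfl]
      by_cases h2 : (v.2 : ℤ) + 1 = l ∨ (v.2 : ℤ) + 1 = (n : ℤ) + 1 - l <;> simp [h2]
    · intro v hv
      simp [Fin.rev_rev]
    · intro v hv
      have hv' := (Finset.mem_filter.mp hv).2
      rw [Finset.mem_filter]
      refine ⟨Finset.mem_univ _, ?_⟩
      have := v.1.isLt; have := v.2.isLt
      simp only [Fin.val_rev]
      omega
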